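/- For every finite simple graph G and every natural number t, if χℓ(G) > t then there exists a list assignment L on G such that |L(v)| ≥ t for every vertex v, the union ⋃_{v ∈ V(G)} L(v) has fewer than |V(G)| elements, and G admits no acceptable coloring from L. -/

import Mathlib

/-- An acceptable coloring of `G` from the list assignment `L`: a proper coloring
choosing each vertex's color from its list. -/
def IsAcceptable {V α : Type*} (G : SimpleGraph V) (L : V → Finset α) (f : V → α) : Prop :=
  (∀ v, f v ∈ L v) ∧ ∀ ⦃u v : V⦄, G.Adj u v → f u ≠ f v

/-- `G` is `k`-list-colorable: every list assignment with all lists of size at least `k`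
admits an acceptable coloring. -/
def ListColorable {V : Type*} (G : SimpleGraph V) (k : ℕ) : Prop :=
  ∀ L : V → Finset ℕ, (∀ v, k ≤ (L v).card) → ∃ f : V → ℕ, IsAcceptable G L f

/-- The list chromatic number of `G`. -/
noncomputable def listChromaticNumber {V : Type*} (G : SimpleGraph V) : ℕ :=
  sInf {k | ListColorable G k}

theorem bad_lists_with_few_colors {V : Type} [Fintype V] (G : SimpleGraph V) (t : ℕ)
    (h : t < listChromaticNumber G) :
    ∃ L : V → Finset ℕ,
      (∀ v, t ≤ (L v).card) ∧
      (Finset.univ.biUnion L).card < Fintype.card V ∧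
      ¬ ∃ f : V → ℕ, IsAcceptable G L f := by
  classical
  -- Step 1: `G` is not `t`-list-colorable.
  have hnc : ¬ ListColorable G t := by
    intro hc
    exact absurd (Nat.sInf_le hc) (not_le.mpr h)
  rw [ListColorable] at hnc
  push_neg at hnc
  obtain ⟨L, hL, hbad⟩ := hnc
  unfold IsAcceptable at hbad
  -- Step 2: Hall's condition fails for `L` (an SDR would be an acceptable coloring).
  set viol : Finset (Finset V) :=
    Finset.univ.filter (fun s => (s.biUnion L).card < s.card) with hviol
  have hvne : viol.Nonempty := by
    by_contra hempty
    have hall : ∀ s : Finset V, s.card ≤ (s.biUnion L).card := by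
      intro s
      by_contra hs
      exact hempty ⟨s, Finset.mem_filter.mpr ⟨Finset.mem_univ _, lt_of_not_ge hs⟩⟩
    obtain ⟨f, hfinj, hfmem⟩ :=
      (Finset.all_card_le_biUnion_card_iff_exists_injective L).mp hall
    exact hbad f ⟨hfmem, fun u v huv he => (G.ne_of_adj huv) (hfinj he)⟩
  -- Step 3: take a maximum-cardinality Hall violator `S`, with colors `C`.
  obtain ⟨S, hSmem, hSmax⟩ := viol.exists_max_image Finset.card hvne
  have hSv : (S.biUnion L).card < S.card := (Finset.mem_filter.mp hSmem).2
  set C : Finset ℕ := S.biUnion L with hC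
  -- Step 4: key claim: `G[S]` admits no proper coloring from `L`.
  have key : ¬ ∃ g : V → ℕ, (∀ v ∈ S, g v ∈ L v) ∧
      (∀ u ∈ S, ∀ v ∈ S, G.Adj u v → g u ≠ g v) := by
    rintro ⟨g, hg1, hg2⟩
    -- Hall's condition holds for the lists `L v \ C`, `v ∉ S`, by maximality of `S`.
    have hall : ∀ s : Finset {v : V // v ∉ S},
        s.card ≤ (s.biUnion (fun v => L v.1 \ C)).card := by
      intro s
      by_contra hs
      push_neg at hs
      have hTne : s.Nonempty := by
        rcases Finset.eq_empty_or_nonempty s with rfl | hne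
        · simp at hs
        · exact hne
      set T := s.image Subtype.val with hT
      have hTcard : T.card = s.card :=
        Finset.card_image_of_injective _ Subtype.val_injective
      have hdisj : Disjoint S T := by
        rw [Finset.disjoint_right]
        rintro a ha
        rw [hT, Finset.mem_image] at ha
        obtain ⟨b, _, rfl⟩ := ha
        exact fun hmem => b.2 hmem
      have hsub : (S ∪ T).biUnion L ⊆ C ∪ s.biUnion (fun v => L v.1 \ C) := by
        intro c hc
        rw [Finset.mem_biUnion] at hc
        obtain ⟨v, hv, hcv⟩ := hc
        rw [Finset.mem_union] at hv
        rcases hv with hv | hv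
        · exact Finset.mem_union_left _ (Finset.mem_biUnion.mpr ⟨v, hv, hcv⟩)
        · by_cases hcC : c ∈ C
          · exact Finset.mem_union_left _ hcC
          · refine Finset.mem_union_right _ ?_
            rw [Finset.mem_biUnion]
            rw [hT, Finset.mem_image] at hv
            obtain ⟨b, hb, rfl⟩ := hv
            exact ⟨b, hb, Finset.mem_sdiff.mpr ⟨hcv, hcC⟩⟩
      have hviolST : ((S ∪ T).biUnion L).card < (S ∪ T).card := by
        calc ((S ∪ T).biUnion L).card
            ≤ (C ∪ s.biUnion (fun v => L v.1 \ C)).card := Finset.card_le_card hsub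
          _ ≤ C.card + (s.biUnion (fun v => L v.1 \ C)).card := Finset.card_union_le _ _
          _ < S.card + s.card := by omega
          _ = (S ∪ T).card := by rw [Finset.card_union_of_disjoint hdisj, hTcard]
      have hle : (S ∪ T).card ≤ S.card :=
        hSmax _ (Finset.mem_filter.mpr ⟨Finset.mem_univ _, hviolST⟩)
      have hpos : 0 < T.card := by rw [hTcard]; exact Finset.card_pos.mpr hTne
      rw [Finset.card_union_of_disjoint hdisj] at hle
      omega
    obtain ⟨r, hrinj, hrmem⟩ :=
      (Finset.all_card_le_biUnion_card_iff_exists_injective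
        (fun v : {v : V // v ∉ S} => L v.1 \ C)).mp hall
    -- Combine `g` on `S` with the SDR `r` outside `S` into an acceptable coloring.
    refine hbad (fun v => if hv : v ∈ S then g v else r ⟨v, hv⟩) ⟨?_, ?_⟩
    · intro v
      by_cases hv : v ∈ S
      · simpa [hv] using hg1 v hv
      · simpa [hv] using (Finset.mem_sdiff.mp (hrmem ⟨v, hv⟩)).1
    · intro u v huv he
      by_cases hu : u ∈ S <;> by_cases hv : v ∈ S
      · rw [dif_pos hu, dif_pos hv] at he
        exact hg2 u hu v hv huv he
      · rw [dif_pos hu, dif_neg hv] at he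
        refine (Finset.mem_sdiff.mp (hrmem ⟨v, hv⟩)).2 ?_
        rw [← he]
        exact Finset.mem_biUnion.mpr ⟨u, hu, hg1 u hu⟩
      · rw [dif_neg hu, dif_pos hv] at he
        refine (Finset.mem_sdiff.mp (hrmem ⟨u, hu⟩)).2 ?_
        rw [he]
        exact Finset.mem_biUnion.mpr ⟨v, hv, hg1 v hv⟩
      · rw [dif_neg hu, dif_neg hv] at he
        exact G.ne_of_adj huv (congrArg Subtype.val (hrinj he))
  -- Step 5: build the final assignment using only colors in `C`.
  have hSne : S.Nonempty := Finset.card_pos.mp (lt_of_le_of_lt (Nat.zero_le _) hSv)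
  obtain ⟨v₀, hv₀⟩ := hSne
  have htC : t ≤ C.card :=
    le_trans (hL v₀)
      (Finset.card_le_card (fun c hc => Finset.mem_biUnion.mpr ⟨v₀, hv₀, hc⟩))
  obtain ⟨T₀, hT₀sub, hT₀card⟩ := Finset.exists_subset_card_eq htC
  refine ⟨fun v => if v ∈ S then L v else T₀, ?_, ?_, ?_⟩
  · intro v
    by_cases hv : v ∈ S
    · simpa [hv] using hL v
    · simp [hv, hT₀card]
  · have hsub : (Finset.univ.biUnion (fun v => if v ∈ S then L v else T₀)) ⊆ C := by
      intro c hc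
      rw [Finset.mem_biUnion] at hc
      obtain ⟨v, _, hcv⟩ := hc
      by_cases hv : v ∈ S
      · rw [if_pos hv] at hcv; exact Finset.mem_biUnion.mpr ⟨v, hv, hcv⟩
      · rw [if_neg hv] at hcv; exact hT₀sub hcv
    calc (Finset.univ.biUnion (fun v => if v ∈ S then L v else T₀)).card
        ≤ C.card := Finset.card_le_card hsub
      _ < S.card := hSv
      _ ≤ Fintype.card V := Finset.card_le_univ S
  · simp only [IsAcceptable]
    rintro ⟨f, hf1, hf2⟩
    exact key ⟨f, fun v hv => by simpa [hv] using hf1 v,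
      fun u hu v hv huv => hf2 huv⟩
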